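/- Let S be a rectangular band semigroup with separable weight ω = ω_L ⊗ ω_R on S ≅ L × R. Then ℓ¹(S, ω) is pseudo-amenable if and only if S is a singleton. -/

import Mathlib

open scoped TensorProduct
open Filter
open scoped Classical

/-- A weight on a semigroup: strictly positive and submultiplicative. -/
def IsWeight {S : Type*} [Mul S] (ω : S → ℝ) : Prop :=
  (∀ s, 0 < ω s) ∧ ∀ s t, ω (s * t) ≤ ω s * ω t

/-- A characterization of the Beurling algebra `ℓ¹(S, ω)`: a Banach algebra `A`
together with point masses `delta` and coefficient functionals such that every
element is the ℓ¹-sum of its coefficients against the point masses, with the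
weighted ℓ¹-norm, and `delta` is multiplicative (`δ_s * δ_t = δ_{st}`). -/
structure BeurlingStructure (S : Type*) [Mul S] (ω : S → ℝ) (A : Type*)
    [NormedRing A] [NormedAlgebra ℂ A] where
  delta : S → A
  coeff : A →ₗ[ℂ] (S → ℂ)
  delta_mul : ∀ s t : S, delta s * delta t = delta (s * t)
  coeff_delta : ∀ s t : S, coeff (delta s) t = if t = s then 1 else 0
  hasSum_coeff : ∀ a : A, HasSum (fun s => coeff a s • delta s) a
  norm_eq : ∀ a : A, ‖a‖ = ∑' s, ‖coeff a s‖ * ω s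

/-- A pair of commuting continuous left/right module actions of a Banach algebra,
making `E` a Banach `A`-bimodule. -/
def IsBimodule {A : Type*} [NormedRing A] [NormedAlgebra ℂ A]
    {E : Type*} [NormedAddCommGroup E] [NormedSpace ℂ E]
    (l r : A →L[ℂ] E →L[ℂ] E) : Prop :=
  (∀ a b : A, l (a * b) = (l a).comp (l b)) ∧
  (∀ a b : A, r (a * b) = (r b).comp (r a)) ∧
  (∀ a b : A, (l a).comp (r b) = (r b).comp (l a))

/-- Amenability of a Banach algebra: every bounded derivation into the dual of a
Banach bimodule is inner.  (The dual bimodule actions are `(a·f)(x) = f(x·a)` and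
`(f·a)(x) = f(a·x)`.) -/
def IsAmenable (A : Type*) [NormedRing A] [NormedAlgebra ℂ A] : Prop :=
  ∀ (E : Type) [NormedAddCommGroup E] [NormedSpace ℂ E]
    (l r : A →L[ℂ] E →L[ℂ] E), IsBimodule l r →
    ∀ D : A →L[ℂ] (E →L[ℂ] ℂ),
      (∀ a b : A, D (a * b) = (D b).comp (r a) + (D a).comp (l b)) →
      ∃ f : E →L[ℂ] ℂ, ∀ a : A, D a = f.comp (r a) - f.comp (l a)

/-- The projective tensor norm of an element of the algebraic tensor product. -/
noncomputable def projNorm (A B : Type*) [NormedAddCommGroup A] [NormedSpace ℂ A]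
    [NormedAddCommGroup B] [NormedSpace ℂ B] (u : A ⊗[ℂ] B) : ℝ :=
  sInf {r : ℝ | ∃ (n : ℕ) (f : Fin n → A) (g : Fin n → B),
    u = ∑ i, f i ⊗ₜ[ℂ] g i ∧ r = ∑ i, ‖f i‖ * ‖g i‖}

/-- Left action `a • (x ⊗ y) = (a*x) ⊗ y` on `A ⊗ A`. -/
noncomputable def tmulLeft {A : Type*} [NormedRing A] [NormedAlgebra ℂ A] (a : A) :
    A ⊗[ℂ] A →ₗ[ℂ] A ⊗[ℂ] A :=
  TensorProduct.map (LinearMap.mulLeft ℂ a) LinearMap.id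

/-- Right action `(x ⊗ y) • a = x ⊗ (y*a)` on `A ⊗ A`. -/
noncomputable def tmulRight {A : Type*} [NormedRing A] [NormedAlgebra ℂ A] (a : A) :
    A ⊗[ℂ] A →ₗ[ℂ] A ⊗[ℂ] A :=
  TensorProduct.map LinearMap.id (LinearMap.mulRight ℂ a)

/-- Pseudo-amenability: existence of an approximate diagonal.  (Since the algebraic
tensor product is dense in `A ⊗̂ A` in the projective norm, the approximate diagonal
may be taken in the algebraic tensor product, with the module-action conditions
measured in the projective tensor norm.) -/
def IsPseudoAmenable (A : Type*) [NormedRing A] [NormedAlgebra ℂ A] : Prop :=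
  ∃ (ι : Type) (l : Filter ι), l.NeBot ∧ ∃ m : ι → A ⊗[ℂ] A,
    (∀ a : A, Tendsto (fun i => projNorm A A (tmulLeft a (m i) - tmulRight a (m i)))
        l (nhds 0)) ∧
    (∀ a : A, Tendsto (fun i => a * LinearMap.mul' ℂ A (m i)) l (nhds a))

/-- A witness for biprojectivity of `A`: a realization `X` of the completed projective
tensor product `A ⊗̂ A` (with its bimodule actions and multiplication map `pihat`),
together with a bounded bimodule homomorphism `rho : A → A ⊗̂ A` with `π ∘ ρ = id`. -/
structure BiprojectiveWitness (A : Type*) [NormedRing A] [NormedAlgebra ℂ A] where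
  X : Type
  [grp : NormedAddCommGroup X]
  [mod : NormedSpace ℂ X]
  [compl : CompleteSpace X]
  incl : A ⊗[ℂ] A →ₗ[ℂ] X
  dense_incl : DenseRange incl
  norm_incl : ∀ u, ‖incl u‖ = projNorm A A u
  lact : A →L[ℂ] X →L[ℂ] X
  ract : A →L[ℂ] X →L[ℂ] X
  bimod : IsBimodule lact ract
  lact_incl : ∀ (a : A) u, lact a (incl u) = incl (tmulLeft a u)
  ract_incl : ∀ (a : A) u, ract a (incl u) = incl (tmulRight a u)
  pihat : X →L[ℂ] A
  pihat_incl : ∀ u, pihat (incl u) = LinearMap.mul' ℂ A u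
  rho : A →L[ℂ] X
  rho_left : ∀ a b : A, rho (a * b) = lact a (rho b)
  rho_right : ∀ a b : A, rho (a * b) = ract b (rho a)
  pihat_rho : ∀ a : A, pihat (rho a) = a

attribute [instance] BiprojectiveWitness.grp BiprojectiveWitness.mod
  BiprojectiveWitness.compl

/-- `A` is biprojective. -/
def IsBiprojective (A : Type*) [NormedRing A] [NormedAlgebra ℂ A] : Prop :=
  Nonempty (BiprojectiveWitness A)

/-- A witness for biflatness of `A`: a realization `X` of `A ⊗̂ A` together with a
bounded bimodule homomorphism `rho : A → (A ⊗̂ A)**` with `π** ∘ ρ = k_A`. -/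
structure BiflatWitness (A : Type*) [NormedRing A] [NormedAlgebra ℂ A] where
  X : Type
  [grp : NormedAddCommGroup X]
  [mod : NormedSpace ℂ X]
  [compl : CompleteSpace X]
  incl : A ⊗[ℂ] A →ₗ[ℂ] X
  dense_incl : DenseRange incl
  norm_incl : ∀ u, ‖incl u‖ = projNorm A A u
  lact : A →L[ℂ] X →L[ℂ] X
  ract : A →L[ℂ] X →L[ℂ] X
  bimod : IsBimodule lact ract
  lact_incl : ∀ (a : A) u, lact a (incl u) = incl (tmulLeft a u)
  ract_incl : ∀ (a : A) u, ract a (incl u) = incl (tmulRight a u)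
  pihat : X →L[ℂ] A
  pihat_incl : ∀ u, pihat (incl u) = LinearMap.mul' ℂ A u
  rho : A →L[ℂ] ((X →L[ℂ] ℂ) →L[ℂ] ℂ)
  rho_left : ∀ (a b : A) (f : X →L[ℂ] ℂ), rho (a * b) f = rho b (f.comp (lact a))
  rho_right : ∀ (a b : A) (f : X →L[ℂ] ℂ), rho (a * b) f = rho a (f.comp (ract b))
  pihat_rho : ∀ (a : A) (g : A →L[ℂ] ℂ), rho a (g.comp pihat) = g a

/-- `A` is biflat. -/
def IsBiflat (A : Type*) [NormedRing A] [NormedAlgebra ℂ A] : Prop :=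
  Nonempty (BiflatWitness A)

/-- A realization of the completed projective tensor product `A ⊗̂ B` of two Banach
spaces: a Banach space in which the algebraic tensor product sits densely and
isometrically for the projective tensor norm. -/
structure ProjTensorWitness (A B : Type*) [NormedAddCommGroup A] [NormedSpace ℂ A]
    [NormedAddCommGroup B] [NormedSpace ℂ B] where
  X : Type
  [grp : NormedAddCommGroup X]
  [mod : NormedSpace ℂ X]
  [compl : CompleteSpace X]
  incl : A ⊗[ℂ] B →ₗ[ℂ] X
  dense_incl : DenseRange incl
  norm_incl : ∀ u, ‖incl u‖ = projNorm A B u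

attribute [instance] ProjTensorWitness.grp ProjTensorWitness.mod ProjTensorWitness.compl

/-- The principal ideal `S¹ s S¹` generated by `s`, inside the unitization `S¹`. -/
def principalIdeal {S : Type*} [Semigroup S] (s : S) : Set (WithOne S) :=
  {x | ∃ u v : WithOne S, x = u * (s : WithOne S) * v}

/-- The Green-type relation `s τ t ↔ S¹sS¹ = S¹tS¹`. -/
def bandTau {S : Type*} [Semigroup S] (s t : S) : Prop :=
  principalIdeal s = principalIdeal t

/-- Amenability of a (topological) group: existence of a left-invariant mean on the
bounded continuous functions. -/
def GroupIsAmenable (G : Type*) [Group G] [TopologicalSpace G] [IsTopologicalGroup G] :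
    Prop :=
  ∃ m : BoundedContinuousFunction G ℝ →L[ℝ] ℝ,
    m 1 = 1 ∧ (∀ f, 0 ≤ f → 0 ≤ m f) ∧
    ∀ (g : G) (f : BoundedContinuousFunction G ℝ),
      m (f.compContinuous ⟨fun x => g * x, continuous_mul_left g⟩) = m f

/-- A characterization of the Beurling algebra `L¹(G, ω)` of a locally compact group
with Haar measure `μ`: a Banach algebra `A` whose elements are represented by
`ω`-integrable functions on `G`, with the weighted `L¹` norm and convolution product. -/
structure GroupBeurlingStructure (G : Type*) [Group G] [MeasurableSpace G]
    (μ : MeasureTheory.Measure G) (ω : G → ℝ) (A : Type*) [NormedRing A] [NormedAlgebra ℂ A] where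
  toFun : A → G → ℂ
  integrable : ∀ a, MeasureTheory.Integrable (fun g => ‖toFun a g‖ * ω g) μ
  map_add : ∀ a b : A, toFun (a + b) =ᶠ[MeasureTheory.ae μ] toFun a + toFun b
  map_smul : ∀ (c : ℂ) (a : A), toFun (c • a) =ᶠ[MeasureTheory.ae μ] c • toFun a
  eq_zero : ∀ a : A, toFun a =ᶠ[MeasureTheory.ae μ] 0 → a = 0
  norm_eq : ∀ a : A, ‖a‖ = ∫ g, ‖toFun a g‖ * ω g ∂μ
  map_mul : ∀ a b : A, toFun (a * b) =ᶠ[MeasureTheory.ae μ]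
    fun x => ∫ t, toFun a t * toFun b (t⁻¹ * x) ∂μ
  surjective : ∀ f : G → ℂ, Measurable f →
    MeasureTheory.Integrable (fun g => ‖f g‖ * ω g) μ → ∃ a, toFun a =ᶠ[MeasureTheory.ae μ] f

section MyAux

variable {A : Type} [NormedRing A] [NormedAlgebra ℂ A]

lemma my_exists_rep (u : A ⊗[ℂ] A) : ∃ (n : ℕ) (f : Fin n → A) (g : Fin n → A),
    u = ∑ i, f i ⊗ₜ[ℂ] g i := by
  induction u using TensorProduct.induction_on with
  | zero => exact ⟨0, ![], ![], by simp⟩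
  | tmul x y => exact ⟨1, ![x], ![y], by simp⟩
  | add x y hx hy =>
      obtain ⟨n, f, g, hfg⟩ := hx
      obtain ⟨m, f', g', hfg'⟩ := hy
      refine ⟨n + m, Fin.append f f', Fin.append g g', ?_⟩
      rw [Fin.sum_univ_add]
      simp [Fin.append_left, Fin.append_right, ← hfg, ← hfg']

lemma my_norm_mul'_le (u : A ⊗[ℂ] A) : ‖LinearMap.mul' ℂ A u‖ ≤ projNorm A A u := by
  apply le_csInf
  · obtain ⟨n, f, g, h⟩ := my_exists_rep u
    exact ⟨_, n, f, g, h, rfl⟩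
  · rintro r ⟨n, f, g, hu, hr⟩
    subst hu; subst hr
    calc ‖LinearMap.mul' ℂ A (∑ i, f i ⊗ₜ[ℂ] g i)‖ = ‖∑ i, f i * g i‖ := by
          simp [map_sum]
      _ ≤ ∑ i, ‖f i * g i‖ := norm_sum_le _ _
      _ ≤ ∑ i, ‖f i‖ * ‖g i‖ := Finset.sum_le_sum fun i _ => norm_mul_le _ _

lemma my_projNorm_zero : projNorm A A 0 = 0 := by
  have hlb : ∀ r ∈ {r : ℝ | ∃ (n : ℕ) (f : Fin n → A) (g : Fin n → A),
      (0 : A ⊗[ℂ] A) = ∑ i, f i ⊗ₜ[ℂ] g i ∧ r = ∑ i, ‖f i‖ * ‖g i‖}, (0:ℝ) ≤ r := by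
    rintro r ⟨n, f, g, _, hr⟩
    exact hr ▸ Finset.sum_nonneg fun i _ => mul_nonneg (norm_nonneg _) (norm_nonneg _)
  have hmem : (0:ℝ) ∈ {r : ℝ | ∃ (n : ℕ) (f : Fin n → A) (g : Fin n → A),
      (0 : A ⊗[ℂ] A) = ∑ i, f i ⊗ₜ[ℂ] g i ∧ r = ∑ i, ‖f i‖ * ‖g i‖} :=
    ⟨0, ![], ![], by simp, by simp⟩
  exact le_antisymm (csInf_le ⟨0, hlb⟩ hmem) (le_csInf ⟨0, hmem⟩ hlb)

lemma my_mul'_tmulLeft (a : A) (u : A ⊗[ℂ] A) :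
    LinearMap.mul' ℂ A (tmulLeft a u) = a * LinearMap.mul' ℂ A u := by
  induction u using TensorProduct.induction_on with
  | zero => simp
  | tmul x y => simp [tmulLeft, mul_assoc]
  | add x y hx hy => simp only [map_add, hx, hy, mul_add]

lemma my_mul'_tmulRight (a : A) (u : A ⊗[ℂ] A) :
    LinearMap.mul' ℂ A (tmulRight a u) = LinearMap.mul' ℂ A u * a := by
  induction u using TensorProduct.induction_on with
  | zero => simp
  | tmul x y => simp [tmulRight, mul_assoc]
  | add x y hx hy => simp only [map_add, hx, hy, add_mul]

lemma my_delta_mul_left {S : Type} [Mul S] {ω : S → ℝ} (B : BeurlingStructure S ω A)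
    {s₁ s₂ : S} (h : ∀ t, s₁ * t = s₂ * t) (a : A) :
    B.delta s₁ * a = B.delta s₂ * a := by
  have h1 := (B.hasSum_coeff a).mapL (ContinuousLinearMap.mul ℂ A (B.delta s₁))
  have h2 := (B.hasSum_coeff a).mapL (ContinuousLinearMap.mul ℂ A (B.delta s₂))
  have heq : (fun t => (ContinuousLinearMap.mul ℂ A (B.delta s₁)) (B.coeff a t • B.delta t))
      = (fun t => (ContinuousLinearMap.mul ℂ A (B.delta s₂)) (B.coeff a t • B.delta t)) := by
    funext t
    simp only [ContinuousLinearMap.mul_apply', mul_smul_comm, B.delta_mul, h t]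
  rw [heq] at h1
  exact h1.unique h2

lemma my_delta_mul_right {S : Type} [Mul S] {ω : S → ℝ} (B : BeurlingStructure S ω A)
    {s₁ s₂ : S} (h : ∀ t, t * s₁ = t * s₂) (a : A) :
    a * B.delta s₁ = a * B.delta s₂ := by
  have h1 := (B.hasSum_coeff a).mapL ((ContinuousLinearMap.mul ℂ A).flip (B.delta s₁))
  have h2 := (B.hasSum_coeff a).mapL ((ContinuousLinearMap.mul ℂ A).flip (B.delta s₂))
  have heq : (fun t => ((ContinuousLinearMap.mul ℂ A).flip (B.delta s₁)) (B.coeff a t • B.delta t))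
      = (fun t => ((ContinuousLinearMap.mul ℂ A).flip (B.delta s₂)) (B.coeff a t • B.delta t)) := by
    funext t
    simp only [ContinuousLinearMap.flip_apply, ContinuousLinearMap.mul_apply',
      smul_mul_assoc, B.delta_mul, h t]
  rw [heq] at h1
  exact h1.unique h2

end MyAux

/-- For a rectangular band `S ≅ L × R` with separable weight
`ω = ω_L ⊗ ω_R`, `ℓ¹(S,ω)` is pseudo-amenable iff `S` is a singleton. -/
theorem stmt14 (L R : Type) [Mul L] [Mul R] [Nonempty L] [Nonempty R]
    (hL : ∀ s t : L, s * t = s) (hR : ∀ s t : R, s * t = t)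
    (ωL : L → ℝ) (ωR : R → ℝ) (hωL : IsWeight ωL) (hωR : IsWeight ωR)
    (A : Type) [NormedRing A] [NormedAlgebra ℂ A] [CompleteSpace A]
    (B : BeurlingStructure (L × R) (fun p => ωL p.1 * ωR p.2) A) :
    IsPseudoAmenable A ↔ Subsingleton (L × R) := by

  constructor
  · rintro ⟨ι, l, hne, m, hm1, hm2⟩
    by_contra hns
    rw [not_subsingleton_iff_nontrivial] at hns
    obtain ⟨p, q, hpq⟩ := hns
    set e : ι → A := fun i => LinearMap.mul' ℂ A (m i) with he
    have hrai : ∀ a : A, Tendsto (fun i => a * e i) l (nhds a) := hm2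
    have hcomm : ∀ a : A, Tendsto (fun i => a * e i - e i * a) l (nhds 0) := by
      intro a
      rw [tendsto_zero_iff_norm_tendsto_zero]
      refine squeeze_zero (fun i => norm_nonneg _) (fun i => ?_) (hm1 a)
      calc ‖a * e i - e i * a‖
          = ‖LinearMap.mul' ℂ A (tmulLeft a (m i) - tmulRight a (m i))‖ := by
            rw [map_sub, my_mul'_tmulLeft, my_mul'_tmulRight]
        _ ≤ projNorm A A _ := my_norm_mul'_le _
    have hlai : ∀ a : A, Tendsto (fun i => e i * a) l (nhds a) := by
      intro a
      have h := (hrai a).sub (hcomm a)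
      simpa using h
    have hcase : p.1 ≠ q.1 ∨ p.2 ≠ q.2 := by
      by_contra h
      push_neg at h
      exact hpq (Prod.ext h.1 h.2)
    rcases hcase with h | h
    · -- first coordinates differ: use left approximate identity
      set s₁ : L × R := (p.1, p.2) with hs₁
      set s₂ : L × R := (q.1, p.2) with hs₂
      have hs : s₁ ≠ s₂ := by intro hh; rw [hs₁, hs₂, Prod.mk.injEq] at hh; exact h hh.1
      have key0 : ∀ t : L × R, t * s₁ = t * s₂ := by
        intro t
        show (t.1 * p.1, t.2 * p.2) = (t.1 * q.1, t.2 * p.2)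
        rw [hL t.1 p.1, hL t.1 q.1]
      have h1 : Tendsto (fun i => e i * B.delta s₁) l (nhds (B.delta s₁)) := hlai _
      have h2 : Tendsto (fun i => e i * B.delta s₁) l (nhds (B.delta s₂)) := by
        have : (fun i => e i * B.delta s₁) = fun i => e i * B.delta s₂ := by
          funext i; exact my_delta_mul_right B key0 (e i)
        rw [this]; exact hlai _
      have hδ : B.delta s₁ = B.delta s₂ := tendsto_nhds_unique h1 h2
      have c1 : B.coeff (B.delta s₁) s₁ = 1 := by rw [B.coeff_delta]; simp
      have c2 : B.coeff (B.delta s₂) s₁ = 0 := by rw [B.coeff_delta]; simp [hs]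
      rw [hδ, c2] at c1
      exact one_ne_zero c1.symm
    · -- second coordinates differ: use right approximate identity
      set s₁ : L × R := (p.1, p.2) with hs₁
      set s₂ : L × R := (p.1, q.2) with hs₂
      have hs : s₁ ≠ s₂ := by intro hh; rw [hs₁, hs₂, Prod.mk.injEq] at hh; exact h hh.2
      have key0 : ∀ t : L × R, s₁ * t = s₂ * t := by
        intro t
        show (p.1 * t.1, p.2 * t.2) = (p.1 * t.1, q.2 * t.2)
        rw [hR p.2 t.2, hR q.2 t.2]
      have h1 : Tendsto (fun i => B.delta s₁ * e i) l (nhds (B.delta s₁)) := hrai _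
      have h2 : Tendsto (fun i => B.delta s₁ * e i) l (nhds (B.delta s₂)) := by
        have : (fun i => B.delta s₁ * e i) = fun i => B.delta s₂ * e i := by
          funext i; exact my_delta_mul_left B key0 (e i)
        rw [this]; exact hrai _
      have hδ : B.delta s₁ = B.delta s₂ := tendsto_nhds_unique h1 h2
      have c1 : B.coeff (B.delta s₁) s₁ = 1 := by rw [B.coeff_delta]; simp
      have c2 : B.coeff (B.delta s₂) s₁ = 0 := by rw [B.coeff_delta]; simp [hs]
      rw [hδ, c2] at c1
      exact one_ne_zero c1.symm
  · intro hsub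
    obtain ⟨s₀⟩ := (inferInstance : Nonempty (L × R))
    have hrep : ∀ a : A, a = B.coeff a s₀ • B.delta s₀ := by
      intro a
      have h1 := B.hasSum_coeff a
      have h2 : HasSum (fun s : L × R => B.coeff a s • B.delta s)
          (B.coeff a s₀ • B.delta s₀) :=
        hasSum_single s₀ (fun b hb => absurd (Subsingleton.elim b s₀) hb)
      exact h1.unique h2
    have hδδ : B.delta s₀ * B.delta s₀ = B.delta s₀ :=
      (B.delta_mul s₀ s₀).trans (congrArg B.delta (Subsingleton.elim _ _))
    have ha1 : ∀ a : A, a * B.delta s₀ = B.coeff a s₀ • B.delta s₀ := by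
      intro a
      conv_lhs => rw [hrep a]
      rw [smul_mul_assoc, hδδ]
    have ha2 : ∀ a : A, B.delta s₀ * a = B.coeff a s₀ • B.delta s₀ := by
      intro a
      conv_lhs => rw [hrep a]
      rw [mul_smul_comm, hδδ]
    refine ⟨Unit, pure (), Filter.pure_neBot, fun _ => B.delta s₀ ⊗ₜ[ℂ] B.delta s₀, ?_, ?_⟩
    · intro a
      have hz : tmulLeft a (B.delta s₀ ⊗ₜ[ℂ] B.delta s₀)
          - tmulRight a (B.delta s₀ ⊗ₜ[ℂ] B.delta s₀) = 0 := by
        simp only [tmulLeft, tmulRight, TensorProduct.map_tmul, LinearMap.mulLeft_apply,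
          LinearMap.mulRight_apply, LinearMap.id_coe, id_eq, ha1 a, ha2 a,
          TensorProduct.smul_tmul', TensorProduct.tmul_smul, sub_self]
      simp only [hz, my_projNorm_zero]
      exact tendsto_const_nhds
    · intro a
      have hone : a * LinearMap.mul' ℂ A (B.delta s₀ ⊗ₜ[ℂ] B.delta s₀) = a := by
        rw [LinearMap.mul'_apply, hδδ, ha1 a, ← hrep a]
      simp only [hone]
      exact tendsto_const_nhds
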